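/- (Data processing inequality, deterministic case.) Let X, Y be random variables taking values in finite types with joint PMF p(x,y), and let g be any function on the value space of Y. Then the mutual information satisfies I(X; g(Y)) ≤ I(X; Y). -/

import Mathlib

open scoped BigOperators

lemma sum_push {β γ : Type*} [Fintype β] [Fintype γ] [DecidableEq γ]
    (f : β → ℝ) (g : β → γ) (L : γ → ℝ) :
    (∑ z, (∑ y, if g y = z then f y else 0) * L z) = ∑ y, f y * L (g y) := by
  simp_rw [Finset.sum_mul, ite_mul, zero_mul]
  rw [Finset.sum_comm]
  simp


lemma dpi_aux {α β γ : Type*} [Fintype α] [Fintype β] [Fintype γ] [DecidableEq γ]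
    (p : α → β → ℝ) (q : α → γ → ℝ) (g : β → γ)
    (hnn : ∀ x y, 0 ≤ p x y)
    (hq : ∀ x z, q x z = ∑ y, if g y = z then p x y else 0)
    (hsum : ∑ x, ∑ y, p x y = 1) :
    (∑ x, ∑ y, p x y * Real.log (q x (g y) / ((∑ y', p x y') * (∑ x', q x' (g y)))))
      ≤ ∑ x, ∑ y, p x y * Real.log (p x y / ((∑ y', p x y') * (∑ x', p x' y))) := by
  classical
  have hqnn : ∀ x z, 0 ≤ q x z := by
    intro x z; rw [hq]
    exact Finset.sum_nonneg fun y _ => by split <;> simp [hnn]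
  have hqle : ∀ x y, p x y ≤ q x (g y) := by
    intro x y
    rw [hq]
    have := Finset.single_le_sum (f := fun y' => if g y' = g y then p x y' else 0)
      (fun y' _ => by show 0 ≤ (if g y' = g y then p x y' else 0); split <;> simp [hnn]) (Finset.mem_univ y)
    simpa using this
  have hQleR : ∀ y, (∑ x', p x' y) ≤ ∑ x', q x' (g y) :=
    fun y => Finset.sum_le_sum fun x _ => hqle x y
  -- pointwise bound
  have key : ∀ x y,
      p x y - q x (g y) * (∑ x', p x' y) / (∑ x', q x' (g y))
        ≤ p x y * Real.log (p x y / ((∑ y', p x y') * (∑ x', p x' y)))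
          - p x y * Real.log (q x (g y) / ((∑ y', p x y') * (∑ x', q x' (g y)))) := by
    intro x y
    rcases eq_or_lt_of_le (hnn x y) with h0 | hpos
    · have : 0 ≤ q x (g y) * (∑ x', p x' y) / (∑ x', q x' (g y)) := by
        apply div_nonneg (mul_nonneg (hqnn _ _) (Finset.sum_nonneg fun x' _ => hnn x' y))
          (Finset.sum_nonneg fun x' _ => hqnn x' _)
      simp [← h0]
      linarith
    · have hPx : 0 < ∑ y', p x y' :=
        lt_of_lt_of_le hpos (Finset.single_le_sum (fun y' _ => hnn x y') (Finset.mem_univ y))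
      have hQy : 0 < ∑ x', p x' y :=
        lt_of_lt_of_le hpos (Finset.single_le_sum (fun x' _ => hnn x' y) (Finset.mem_univ x))
      have hqv : 0 < q x (g y) := lt_of_lt_of_le hpos (hqle x y)
      have hRv : 0 < ∑ x', q x' (g y) :=
        lt_of_lt_of_le hqv (Finset.single_le_sum (fun x' _ => hqnn x' _) (Finset.mem_univ x))
      set a := p x y
      set Px := ∑ y', p x y'
      set Qy := ∑ x', p x' y
      set qv := q x (g y)
      set Rv := ∑ x', q x' (g y)
      have hA : 0 < a / (Px * Qy) := div_pos hpos (mul_pos hPx hQy)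
      have hB : 0 < qv / (Px * Rv) := div_pos hqv (mul_pos hPx hRv)
      have hlog : Real.log (qv / (Px * Rv)) - Real.log (a / (Px * Qy))
          ≤ (qv / (Px * Rv)) / (a / (Px * Qy)) - 1 := by
        have := Real.log_le_sub_one_of_pos (div_pos hB hA)
        rwa [Real.log_div hB.ne' hA.ne'] at this
      have hratio : (qv / (Px * Rv)) / (a / (Px * Qy)) = qv * Qy / (a * Rv) := by
        field_simp
      rw [hratio] at hlog
      have hmul := mul_le_mul_of_nonneg_left hlog (le_of_lt hpos)
      have hcalc : a * (qv * Qy / (a * Rv)) = qv * Qy / Rv := by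
        field_simp
      have : qv * Qy / Rv = qv * Qy / Rv := rfl
      nlinarith [hmul, hcalc]
  -- sum of the lower bounds is zero
  have hzero : ∑ x, ∑ y, (p x y - q x (g y) * (∑ x', p x' y) / (∑ x', q x' (g y))) = 0 := by
    have h2 : ∑ x, ∑ y, q x (g y) * (∑ x', p x' y) / (∑ x', q x' (g y)) = 1 := by
      rw [Finset.sum_comm]
      have hy : ∀ y : β, (∑ x, q x (g y) * (∑ x', p x' y) / (∑ x', q x' (g y)))
          = ∑ x', p x' y := by
        intro y
        by_cases hR : (∑ x', q x' (g y)) = 0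
        · have hQ0 : (∑ x', p x' y) = 0 :=
            le_antisymm (hR ▸ hQleR y) (Finset.sum_nonneg fun x' _ => hnn x' y)
          simp [hR, hQ0]
        · rw [← Finset.sum_div, ← Finset.sum_mul, mul_comm, mul_div_assoc,
            div_self hR, mul_one]
      rw [Finset.sum_congr rfl fun y _ => hy y, Finset.sum_comm, hsum]
    simp_rw [Finset.sum_sub_distrib]
    rw [hsum, h2, sub_self]
  rw [← sub_nonneg]
  have : (∑ x, ∑ y, p x y * Real.log (p x y / ((∑ y', p x y') * (∑ x', p x' y))))
      - (∑ x, ∑ y, p x y * Real.log (q x (g y) / ((∑ y', p x y') * (∑ x', q x' (g y)))))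
      = ∑ x, ∑ y, (p x y * Real.log (p x y / ((∑ y', p x y') * (∑ x', p x' y)))
          - p x y * Real.log (q x (g y) / ((∑ y', p x y') * (∑ x', q x' (g y))))) := by
    simp_rw [Finset.sum_sub_distrib]
  rw [this, ← hzero]
  exact Finset.sum_le_sum fun x _ => Finset.sum_le_sum fun y _ => key x y

/-- Data processing inequality (deterministic case): for a joint PMF `p` of `(X, Y)`
and any function `g` on the value space of `Y`, `I(X; g(Y)) ≤ I(X; Y)`. The joint
PMF of `(X, g(Y))` is the pushforward of `p` along `(x, y) ↦ (x, g y)`. -/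
theorem data_processing_inequality_deterministic
    {α β γ : Type*} [Fintype α] [Fintype β] [Fintype γ] [DecidableEq γ]
    (p : α → β → ℝ)
    (hnn : ∀ x y, 0 ≤ p x y)
    (hsum : ∑ x, ∑ y, p x y = 1)
    (g : β → γ) :
    (∑ x, ∑ z, (∑ y, if g y = z then p x y else 0) *
        Real.log ((∑ y, if g y = z then p x y else 0) /
          ((∑ y', p x y') * (∑ x', ∑ y, if g y = z then p x' y else 0))))
      ≤ ∑ x, ∑ y, p x y *
          Real.log (p x y / ((∑ y', p x y') * (∑ x', p x' y))) := by
  have hre : ∀ x : α,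
      (∑ z, (∑ y, if g y = z then p x y else 0) *
        Real.log ((∑ y, if g y = z then p x y else 0) /
          ((∑ y', p x y') * (∑ x', ∑ y, if g y = z then p x' y else 0))))
      = ∑ y, p x y *
        Real.log ((∑ y'', if g y'' = g y then p x y'' else 0) /
          ((∑ y', p x y') * (∑ x', ∑ y'', if g y'' = g y then p x' y'' else 0))) := by
    intro x
    exact sum_push (p x) g (fun z => Real.log ((∑ y, if g y = z then p x y else 0) /
      ((∑ y', p x y') * (∑ x', ∑ y, if g y = z then p x' y else 0))))
  rw [Finset.sum_congr rfl fun x _ => hre x]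
  exact dpi_aux p (fun x z => ∑ y, if g y = z then p x y else 0) g hnn
    (fun _ _ => rfl) hsum
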